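/- For all positive integers s_x, s_y and all δ > 0 there exists a constant M (depending only on s_x, s_y, δ) with the following property: for every probability measure P on ℝ^{s_x} × ℝ^{s_y} supported in [−1,1]^{s_x} × [−1,1]^{s_y} whose covariance matrices Σ_X and Σ_Y have smallest eigenvalues at least δ and whose cross-covariance Σ_XY is nonzero, and for every (x, y) ∈ [−1,1]^{s_x} × [−1,1]^{s_y}, the canonical gradient of the root-Pillai trace satisfies | (2‖Λ_XY‖_F)^{-1} [ −(x−μ_X)ᵀ Σ_X^{-1} Σ_XY Σ_Y^{-1} Σ_YX Σ_X^{-1} (x−μ_X) − (y−μ_Y)ᵀ Σ_Y^{-1} Σ_YX Σ_X^{-1} Σ_XY Σ_Y^{-1} (y−μ_Y) + 2 (y−μ_Y)ᵀ Σ_Y^{-1} Σ_YX Σ_X^{-1} (x−μ_X) ] | ≤ M, where Λ_XY = Σ_X^{-1/2} Σ_XY Σ_Y^{-1/2}. -/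

import Mathlib

open Matrix MeasureTheory

noncomputable section

/-- Squared Frobenius norm of a real matrix: `‖M‖_F² = tr (M Mᵀ)`. -/
def frobSq {m n : Type*} [Fintype m] [Fintype n] (M : Matrix m n ℝ) : ℝ :=
  Matrix.trace (M * Mᵀ)

/-- Frobenius norm of a real matrix. -/
def frobNorm {m n : Type*} [Fintype m] [Fintype n] (M : Matrix m n ℝ) : ℝ :=
  Real.sqrt (frobSq M)

open Classical in
/-- `A^{-1/2}`: the inverse of the unique positive definite square root of a positive
definite matrix `A` (junk value `0` if `A` is not positive definite). -/
def invSqrt {n : Type*} [Fintype n] [DecidableEq n] (A : Matrix n n ℝ) : Matrix n n ℝ :=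
  if h : A.PosDef then
    ((h.posSemidef.isHermitian.eigenvectorUnitary : Matrix n n ℝ) *
      diagonal ((↑) ∘ (√·) ∘ h.posSemidef.isHermitian.eigenvalues) *
      (star h.posSemidef.isHermitian.eigenvectorUnitary : Matrix n n ℝ))⁻¹ else 0

variable {p q : ℕ}

/-- Mean vector `μ_X` of the first component under `P`. -/
def meanX (P : Measure ((Fin p → ℝ) × (Fin q → ℝ))) : Fin p → ℝ :=
  fun i => ∫ o, o.1 i ∂P

/-- Mean vector `μ_Y` of the second component under `P`. -/
def meanY (P : Measure ((Fin p → ℝ) × (Fin q → ℝ))) : Fin q → ℝ :=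
  fun j => ∫ o, o.2 j ∂P

/-- Covariance matrix `Σ_X` of the first component under `P`, defined entrywise. -/
def covX (P : Measure ((Fin p → ℝ) × (Fin q → ℝ))) : Matrix (Fin p) (Fin p) ℝ :=
  Matrix.of fun i i' => ∫ o, (o.1 i - meanX P i) * (o.1 i' - meanX P i') ∂P

/-- Covariance matrix `Σ_Y` of the second component under `P`, defined entrywise. -/
def covY (P : Measure ((Fin p → ℝ) × (Fin q → ℝ))) : Matrix (Fin q) (Fin q) ℝ :=
  Matrix.of fun j j' => ∫ o, (o.2 j - meanY P j) * (o.2 j' - meanY P j') ∂P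

/-- Cross-covariance matrix `Σ_XY` under `P`, defined entrywise. -/
def covXY (P : Measure ((Fin p → ℝ) × (Fin q → ℝ))) : Matrix (Fin p) (Fin q) ℝ :=
  Matrix.of fun i j => ∫ o, (o.1 i - meanX P i) * (o.2 j - meanY P j) ∂P

/-- The Pillai trace `Φ(P) = tr (Σ_X⁻¹ Σ_XY Σ_Y⁻¹ Σ_YX)` of `P`. -/
def pillai (P : Measure ((Fin p → ℝ) × (Fin q → ℝ))) : ℝ :=
  Matrix.trace ((covX P)⁻¹ * covXY P * (covY P)⁻¹ * (covXY P)ᵀ)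

/-- The Dirac contamination `P_ε = (1−ε) P + ε δ_o`. -/
def pert (P : Measure ((Fin p → ℝ) × (Fin q → ℝ))) (o : (Fin p → ℝ) × (Fin q → ℝ)) (ε : ℝ) :
    Measure ((Fin p → ℝ) × (Fin q → ℝ)) :=
  ENNReal.ofReal (1 - ε) • P + ENNReal.ofReal ε • Measure.dirac o


section Aux
variable {m n r : Type*} [Fintype m] [Fintype n] [Fintype r]

lemma dot_self_nonneg (v : n → ℝ) : 0 ≤ v ⬝ᵥ v :=
  Finset.sum_nonneg fun i _ => mul_self_nonneg (v i)

lemma frobSq_eq_sum (M : Matrix m n ℝ) : frobSq M = ∑ i, ∑ j, (M i j)^2 := by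
  simp [frobSq, Matrix.trace, Matrix.mul_apply, Matrix.diag, sq]

lemma frobSq_nonneg (M : Matrix m n ℝ) : 0 ≤ frobSq M := by
  rw [frobSq_eq_sum]; positivity

lemma frobNorm_nonneg (M : Matrix m n ℝ) : 0 ≤ frobNorm M := Real.sqrt_nonneg _

lemma frobSq_transpose (M : Matrix m n ℝ) : frobSq Mᵀ = frobSq M := by
  rw [frobSq_eq_sum, frobSq_eq_sum, Finset.sum_comm]; rfl

lemma frobNorm_transpose (M : Matrix m n ℝ) : frobNorm Mᵀ = frobNorm M := by
  rw [frobNorm, frobNorm, frobSq_transpose]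

lemma frobSq_mul_le (M : Matrix m n ℝ) (N : Matrix n r ℝ) :
    frobSq (M * N) ≤ frobSq M * frobSq N := by
  rw [frobSq_eq_sum, frobSq_eq_sum, frobSq_eq_sum]
  calc ∑ i, ∑ k, ((M * N) i k)^2
      ≤ ∑ i, ∑ k, (∑ j, M i j ^ 2) * (∑ j, N j k ^ 2) := by
        gcongr with i _ k _
        rw [Matrix.mul_apply]
        exact Finset.sum_mul_sq_le_sq_mul_sq _ _ _
    _ = (∑ i, ∑ j, M i j ^ 2) * (∑ k, ∑ j, N j k ^ 2) := by
        rw [Finset.sum_mul_sum]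
    _ = (∑ i, ∑ j, M i j ^ 2) * (∑ j, ∑ k, N j k ^ 2) := by
        congr 1
        exact Finset.sum_comm

lemma frobSq_pos {M : Matrix m n ℝ} (h : M ≠ 0) : 0 < frobSq M := by
  rcases (frobSq_nonneg M).lt_or_eq with h' | h'
  · exact h'
  · exfalso
    apply h
    ext i j
    rw [frobSq_eq_sum] at h'
    have h1 : ∀ i ∈ Finset.univ, (∑ j, (M i j)^2) = 0 := by
      intro i _
      exact (Finset.sum_eq_zero_iff_of_nonneg (fun i (_ : i ∈ Finset.univ) =>
        Finset.sum_nonneg fun j _ => sq_nonneg (M i j))).mp h'.symm i (Finset.mem_univ i)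
    have h2 := (Finset.sum_eq_zero_iff_of_nonneg (fun j _ => by positivity)).mp
      (h1 i (Finset.mem_univ i)) j (Finset.mem_univ j)
    simpa using pow_eq_zero_iff (n := 2) (by norm_num) |>.mp h2

lemma abs_dot_mulVec_le (u : m → ℝ) (M : Matrix m n ℝ) (w : n → ℝ) :
    |u ⬝ᵥ M.mulVec w| ≤ Real.sqrt (u ⬝ᵥ u) * Real.sqrt (w ⬝ᵥ w) * frobNorm M := by
  have key : u ⬝ᵥ M.mulVec w = ∑ p : m × n, (u p.1 * w p.2) * M p.1 p.2 := by
    rw [Fintype.sum_prod_type]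
    simp only [dotProduct, Matrix.mulVec, dotProduct, Finset.mul_sum]
    exact Finset.sum_congr rfl fun i _ => Finset.sum_congr rfl fun j _ => by ring
  have h1 : (u ⬝ᵥ M.mulVec w)^2 ≤ ((u ⬝ᵥ u) * (w ⬝ᵥ w)) * frobSq M := by
    rw [key]
    have := Finset.sum_mul_sq_le_sq_mul_sq Finset.univ
      (fun p : m × n => u p.1 * w p.2) (fun p : m × n => M p.1 p.2)
    calc (∑ p : m × n, (u p.1 * w p.2) * M p.1 p.2)^2
        ≤ (∑ p : m × n, (u p.1 * w p.2)^2) * (∑ p : m × n, (M p.1 p.2)^2) := this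
      _ = ((u ⬝ᵥ u) * (w ⬝ᵥ w)) * frobSq M := by
          rw [frobSq_eq_sum, Fintype.sum_prod_type, Fintype.sum_prod_type]
          simp only [dotProduct, mul_pow, sq]
          congr 1
          rw [Finset.sum_mul_sum]
          exact Finset.sum_congr rfl fun i _ => Finset.sum_congr rfl fun j _ => by ring
  have h2 := Real.sqrt_le_sqrt h1
  rw [Real.sqrt_sq_eq_abs] at h2
  refine h2.trans_eq ?_
  rw [Real.sqrt_mul (mul_nonneg (dot_self_nonneg u) (dot_self_nonneg w)),
    Real.sqrt_mul (dot_self_nonneg u)]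
  rfl

lemma dotProduct_self_pos {v : n → ℝ} (hv : v ≠ 0) : 0 < v ⬝ᵥ v := by
  rcases Function.ne_iff.mp hv with ⟨i, hi⟩
  have : (0:ℝ) < v i * v i := by
    have := mul_self_pos.mpr (by simpa using hi)
    simpa using this
  exact Finset.sum_pos' (fun j _ => mul_self_nonneg _) ⟨i, Finset.mem_univ i, this⟩

end Aux

section InvSqrtFacts

lemma invSqrt_facts {n : Type*} [Fintype n] [DecidableEq n] {A : Matrix n n ℝ} (hA : A.PosDef)
    {δ : ℝ} (hδ : 0 < δ) (hform : ∀ v : n → ℝ, δ * (v ⬝ᵥ v) ≤ v ⬝ᵥ A *ᵥ v) :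
    (invSqrt A)ᵀ = invSqrt A ∧ A⁻¹ = invSqrt A * invSqrt A ∧
      (∃ R : Matrix n n ℝ, R * invSqrt A = 1 ∧ invSqrt A * R = 1) ∧
      (∀ z : n → ℝ, (invSqrt A *ᵥ z) ⬝ᵥ (invSqrt A *ᵥ z) ≤ δ⁻¹ * (z ⬝ᵥ z)) ∧
      frobSq (invSqrt A) ≤ (Fintype.card n : ℝ) * δ⁻¹ := by
  have hAps := hA.posSemidef
  set RA := (hAps.isHermitian.eigenvectorUnitary : Matrix n n ℝ) *
      diagonal ((↑) ∘ (√·) ∘ hAps.isHermitian.eigenvalues) *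
      (star hAps.isHermitian.eigenvectorUnitary : Matrix n n ℝ) with hRAdef
  have hi : invSqrt A = RA⁻¹ := dif_pos hA
  have hRAmul : RA * RA = A := by
    conv_rhs => rw [hAps.isHermitian.spectral_theorem]
    have hUU : (star hAps.isHermitian.eigenvectorUnitary : Matrix n n ℝ) *
        (hAps.isHermitian.eigenvectorUnitary : Matrix n n ℝ) = 1 := Unitary.coe_star_mul_self _
    have hDD : diagonal ((↑) ∘ (√·) ∘ hAps.isHermitian.eigenvalues) *
        diagonal ((↑) ∘ (√·) ∘ hAps.isHermitian.eigenvalues) =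
        diagonal (RCLike.ofReal ∘ hAps.isHermitian.eigenvalues : n → ℝ) := by
      rw [Matrix.diagonal_mul_diagonal]
      congr 1
      funext i
      simp [Real.mul_self_sqrt (hAps.eigenvalues_nonneg i)]
    rw [Unitary.conjStarAlgAut_apply, hRAdef, ← hDD]
    simp only [Matrix.mul_assoc]
    rw [← Matrix.mul_assoc (star _ : Matrix n n ℝ) (hAps.isHermitian.eigenvectorUnitary : Matrix n n ℝ), hUU, Matrix.one_mul]
  have hRAherm : RAᵀ = RA := by
    rw [hRAdef]
    simp [Matrix.transpose_mul, Matrix.star_eq_conjTranspose, Matrix.mul_assoc]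
  have hdet2 : RA.det * RA.det = A.det := by rw [← Matrix.det_mul, hRAmul]
  have hdetA : IsUnit RA.det := by
    refine isUnit_iff_ne_zero.mpr fun h0 => ?_
    have := hA.det_pos
    rw [h0, mul_zero] at hdet2
    exact this.ne' hdet2.symm
  have hRAinv : RA * RA⁻¹ = 1 := Matrix.mul_nonsing_inv _ hdetA
  have hRAinv' : RA⁻¹ * RA = 1 := Matrix.nonsing_inv_mul _ hdetA
  have hAform : ∀ w : n → ℝ, (RA *ᵥ w) ⬝ᵥ (RA *ᵥ w) = w ⬝ᵥ A *ᵥ w := by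
    intro w
    conv_rhs => rw [← hRAmul, ← Matrix.mulVec_mulVec, Matrix.dotProduct_mulVec]
    rw [← Matrix.mulVec_transpose, hRAherm]
  have hScontr : ∀ z : n → ℝ, (RA⁻¹ *ᵥ z) ⬝ᵥ (RA⁻¹ *ᵥ z) ≤ δ⁻¹ * (z ⬝ᵥ z) := by
    intro z
    have hz : RA *ᵥ (RA⁻¹ *ᵥ z) = z := by
      rw [Matrix.mulVec_mulVec, hRAinv, Matrix.one_mulVec]
    have h1 : δ * ((RA⁻¹ *ᵥ z) ⬝ᵥ (RA⁻¹ *ᵥ z)) ≤ z ⬝ᵥ z := by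
      have h2 := hform (RA⁻¹ *ᵥ z)
      rw [← hAform (RA⁻¹ *ᵥ z), hz] at h2
      exact h2
    calc (RA⁻¹ *ᵥ z) ⬝ᵥ (RA⁻¹ *ᵥ z)
        = δ⁻¹ * (δ * ((RA⁻¹ *ᵥ z) ⬝ᵥ (RA⁻¹ *ᵥ z))) := by field_simp
      _ ≤ δ⁻¹ * (z ⬝ᵥ z) := by
          exact mul_le_mul_of_nonneg_left h1 (inv_nonneg.mpr hδ.le)
  refine ⟨?_, ?_, ⟨RA, ?_, ?_⟩, ?_, ?_⟩
  · rw [hi, Matrix.transpose_nonsing_inv, hRAherm]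
  · rw [hi, ← hRAmul, Matrix.mul_inv_rev]
  · rw [hi]; exact hRAinv
  · rw [hi]; exact hRAinv'
  · rw [hi]; exact hScontr
  · rw [hi, frobSq_eq_sum, Finset.sum_comm]
    have hcol : ∀ j, ∑ i, (RA⁻¹ i j)^2 ≤ δ⁻¹ := by
      intro j
      have h1 := hScontr (Pi.single j 1)
      have hsingle : (Pi.single j 1 : n → ℝ) ⬝ᵥ Pi.single j 1 = 1 := by
        simp [dotProduct, Pi.single_apply]
      have hcolv : ∀ i, (RA⁻¹ *ᵥ Pi.single j 1) i = RA⁻¹ i j := by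
        intro i; simp [Matrix.mulVec, dotProduct, Pi.single_apply]
      rw [hsingle, mul_one] at h1
      calc ∑ i, (RA⁻¹ i j)^2 = (RA⁻¹ *ᵥ Pi.single j 1) ⬝ᵥ (RA⁻¹ *ᵥ Pi.single j 1) := by
            simp [dotProduct, hcolv, sq]
        _ ≤ δ⁻¹ := h1
    calc ∑ j, ∑ i, (RA⁻¹ i j)^2 ≤ ∑ _j : n, δ⁻¹ := Finset.sum_le_sum fun j _ => hcol j
      _ = (Fintype.card n : ℝ) * δ⁻¹ := by simp [Finset.sum_const, nsmul_eq_mul]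

lemma quad_conj {n r : Type*} [Fintype n] [Fintype r] (S : Matrix n n ℝ) (hS : Sᵀ = S)
    (N : Matrix n r ℝ) (T : Matrix r r ℝ) (a : n → ℝ) (b : r → ℝ) :
    a ⬝ᵥ (S * N * T) *ᵥ b = (S *ᵥ a) ⬝ᵥ (N *ᵥ (T *ᵥ b)) := by
  rw [← Matrix.mulVec_mulVec, ← Matrix.mulVec_mulVec, Matrix.dotProduct_mulVec,
    ← Matrix.mulVec_transpose, hS]

end InvSqrtFacts

set_option maxHeartbeats 2000000 in
/-- Uniform boundedness of the canonical gradient of the root-Pillai trace: for any sparsity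
levels `s_x, s_y ≥ 1` and any `δ > 0` there is a constant `M` bounding the canonical gradient
uniformly over all probability measures `P` supported in `[−1,1]^{s_x} × [−1,1]^{s_y}` whose
covariance matrices have smallest eigenvalues at least `δ` and whose cross-covariance is
nonzero, and over all points `(x, y)` in the cube. -/
theorem canonical_gradient_uniformly_bounded :
    ∀ sx sy : ℕ, 0 < sx → 0 < sy → ∀ δ : ℝ, 0 < δ →
      ∃ M : ℝ, ∀ P : Measure ((Fin sx → ℝ) × (Fin sy → ℝ)), IsProbabilityMeasure P →
        (∀ᵐ o ∂P, (∀ i, |o.1 i| ≤ 1) ∧ (∀ j, |o.2 j| ≤ 1)) →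
        (∀ v : Fin sx → ℝ, δ * (v ⬝ᵥ v) ≤ v ⬝ᵥ (covX P).mulVec v) →
        (∀ v : Fin sy → ℝ, δ * (v ⬝ᵥ v) ≤ v ⬝ᵥ (covY P).mulVec v) →
        covXY P ≠ 0 →
        ∀ x : Fin sx → ℝ, ∀ y : Fin sy → ℝ, (∀ i, |x i| ≤ 1) → (∀ j, |y j| ≤ 1) →
        |(2 * frobNorm (invSqrt (covX P) * covXY P * invSqrt (covY P)))⁻¹ *
            (-((fun i => x i - meanX P i) ⬝ᵥ
                  (((covX P)⁻¹ * covXY P * (covY P)⁻¹ * (covXY P)ᵀ * (covX P)⁻¹).mulVec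
                    (fun i => x i - meanX P i)))
              - ((fun j => y j - meanY P j) ⬝ᵥ
                  (((covY P)⁻¹ * (covXY P)ᵀ * (covX P)⁻¹ * covXY P * (covY P)⁻¹).mulVec
                    (fun j => y j - meanY P j)))
              + 2 * ((fun j => y j - meanY P j) ⬝ᵥ
                  (((covY P)⁻¹ * (covXY P)ᵀ * (covX P)⁻¹).mulVec
                    (fun i => x i - meanX P i))))| ≤ M := by
  
  intro sx sy _hsx _hsy δ hδ
  refine ⟨(4*(sx:ℝ)/δ + 4*(sy:ℝ)/δ) *
      Real.sqrt (((sx:ℝ)/δ) * (16*(sx:ℝ)*(sy:ℝ)) * ((sy:ℝ)/δ)) / 2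
      + Real.sqrt (4*(sy:ℝ)/δ) * Real.sqrt (4*(sx:ℝ)/δ), ?_⟩
  intro P hP hsupp hX hY hCne x y hx hy
  haveI := hP
  have hμX : ∀ i, |meanX P i| ≤ 1 := by
    intro i
    have hb : ∀ᵐ o ∂P, ‖o.1 i‖ ≤ 1 :=
      hsupp.mono fun o ho => by simpa [Real.norm_eq_abs] using ho.1 i
    have h := norm_integral_le_of_norm_le_const (μ := P) hb
    simpa [meanX, Real.norm_eq_abs, measure_univ] using h
  have hμY : ∀ j, |meanY P j| ≤ 1 := by
    intro j
    have hb : ∀ᵐ o ∂P, ‖o.2 j‖ ≤ 1 :=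
      hsupp.mono fun o ho => by simpa [Real.norm_eq_abs] using ho.2 j
    have h := norm_integral_le_of_norm_le_const (μ := P) hb
    simpa [meanY, Real.norm_eq_abs, measure_univ] using h
  have hCb : ∀ i j, |covXY P i j| ≤ 4 := by
    intro i j
    have hb : ∀ᵐ o ∂P, ‖(o.1 i - meanX P i) * (o.2 j - meanY P j)‖ ≤ 4 := by
      filter_upwards [hsupp] with o ho
      have h1 := abs_le.mp (ho.1 i)
      have h2 := abs_le.mp (hμX i)
      have h3 := abs_le.mp (ho.2 j)
      have h4 := abs_le.mp (hμY j)
      rw [Real.norm_eq_abs, abs_mul]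
      have e1 : |o.1 i - meanX P i| ≤ 2 := abs_le.mpr ⟨by linarith, by linarith⟩
      have e2 : |o.2 j - meanY P j| ≤ 2 := abs_le.mpr ⟨by linarith, by linarith⟩
      calc |o.1 i - meanX P i| * |o.2 j - meanY P j| ≤ 2 * 2 :=
            mul_le_mul e1 e2 (abs_nonneg _) (by norm_num)
        _ = 4 := by norm_num
    have h := norm_integral_le_of_norm_le_const (μ := P) hb
    simpa [covXY, Real.norm_eq_abs, measure_univ] using h
  have hApd : (covX P).PosDef := by
    refine Matrix.PosDef.of_dotProduct_mulVec_pos ?_ ?_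
    · ext i j
      simp only [Matrix.conjTranspose_apply, star_trivial]
      show covX P j i = covX P i j
      simp only [covX, Matrix.of_apply]
      congr 1
      funext o
      ring
    · intro v hv
      have h0 : (0:ℝ) < v ⬝ᵥ v := dotProduct_self_pos hv
      have hsv : star v = v := by funext i; simp
      rw [hsv]
      calc (0:ℝ) < δ * (v ⬝ᵥ v) := mul_pos hδ h0
        _ ≤ _ := hX v
  have hBpd : (covY P).PosDef := by
    refine Matrix.PosDef.of_dotProduct_mulVec_pos ?_ ?_
    · ext i j
      simp only [Matrix.conjTranspose_apply, star_trivial]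
      show covY P j i = covY P i j
      simp only [covY, Matrix.of_apply]
      congr 1
      funext o
      ring
    · intro v hv
      have h0 : (0:ℝ) < v ⬝ᵥ v := dotProduct_self_pos hv
      have hsv : star v = v := by funext i; simp
      rw [hsv]
      calc (0:ℝ) < δ * (v ⬝ᵥ v) := mul_pos hδ h0
        _ ≤ _ := hY v
  obtain ⟨hSAsym, hAinv, ⟨RA, hRA1, hRA2⟩, hSAcontr, hSAfrob⟩ := invSqrt_facts hApd hδ hX
  obtain ⟨hSBsym, hBinv, ⟨RB, hRB1, hRB2⟩, hSBcontr, hSBfrob⟩ := invSqrt_facts hBpd hδ hY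
  set SA := invSqrt (covX P) with hSAdef
  set SB := invSqrt (covY P) with hSBdef
  set C := covXY P with hCdef
  set dx : Fin sx → ℝ := fun i => x i - meanX P i with hdxdef
  set dy : Fin sy → ℝ := fun j => y j - meanY P j with hdydef
  set Λ := SA * C * SB with hΛdef
  have hΛt : Λᵀ = SB * Cᵀ * SA := by
    rw [hΛdef]
    simp only [Matrix.transpose_mul, hSAsym, hSBsym, Matrix.mul_assoc]
  have hΛne : Λ ≠ 0 := by
    intro h0
    apply hCne
    have hCc : C = RA * Λ * RB := by
      calc C = (RA * SA) * C * (SB * RB) := by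
            rw [hRA1, hRB2, Matrix.one_mul, Matrix.mul_one]
        _ = RA * Λ * RB := by rw [hΛdef]; simp only [Matrix.mul_assoc]
    rw [hCc, h0, Matrix.mul_zero, Matrix.zero_mul]
  have hCfrob : frobSq C ≤ 16 * (sx:ℝ) * (sy:ℝ) := by
    rw [frobSq_eq_sum]
    calc ∑ i, ∑ j, (C i j)^2 ≤ ∑ _i : Fin sx, ∑ _j : Fin sy, (16:ℝ) := by
          refine Finset.sum_le_sum fun i _ => Finset.sum_le_sum fun j _ => ?_
          have h := abs_le.mp (hCb i j)
          nlinarith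
      _ = 16 * (sx:ℝ) * (sy:ℝ) := by
          simp [Finset.sum_const, nsmul_eq_mul]
          ring
  have hSAfrob' : frobSq SA ≤ (sx:ℝ)/δ := by
    have h := hSAfrob
    rw [Fintype.card_fin] at h
    calc frobSq SA ≤ (sx:ℝ) * δ⁻¹ := h
      _ = (sx:ℝ)/δ := by rw [div_eq_mul_inv]
  have hSBfrob' : frobSq SB ≤ (sy:ℝ)/δ := by
    have h := hSBfrob
    rw [Fintype.card_fin] at h
    calc frobSq SB ≤ (sy:ℝ) * δ⁻¹ := h
      _ = (sy:ℝ)/δ := by rw [div_eq_mul_inv]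
  have hΛfrob : frobSq Λ ≤ ((sx:ℝ)/δ) * (16*(sx:ℝ)*(sy:ℝ)) * ((sy:ℝ)/δ) := by
    have hd : (0:ℝ) ≤ (sx:ℝ)/δ := div_nonneg (by positivity) hδ.le
    calc frobSq Λ ≤ frobSq (SA * C) * frobSq SB := frobSq_mul_le _ _
      _ ≤ (frobSq SA * frobSq C) * frobSq SB :=
          mul_le_mul_of_nonneg_right (frobSq_mul_le _ _) (frobSq_nonneg _)
      _ ≤ ((sx:ℝ)/δ) * (16*(sx:ℝ)*(sy:ℝ)) * ((sy:ℝ)/δ) := by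
          refine mul_le_mul (mul_le_mul hSAfrob' ?_ (frobSq_nonneg _) hd) hSBfrob'
            (frobSq_nonneg _) (mul_nonneg hd (by positivity))
          calc frobSq C ≤ 16 * (sx:ℝ) * (sy:ℝ) := hCfrob
            _ = 16*(sx:ℝ)*(sy:ℝ) := by ring
  have hdxb : dx ⬝ᵥ dx ≤ 4 * (sx:ℝ) := by
    simp only [dotProduct]
    calc ∑ i, dx i * dx i ≤ ∑ _i : Fin sx, (4:ℝ) := by
          refine Finset.sum_le_sum fun i _ => ?_
          have h1 := abs_le.mp (hx i)
          have h2 := abs_le.mp (hμX i)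
          simp only [hdxdef]
          nlinarith
      _ = 4 * (sx:ℝ) := by
          simp [Finset.sum_const, nsmul_eq_mul]
          ring
  have hdyb : dy ⬝ᵥ dy ≤ 4 * (sy:ℝ) := by
    simp only [dotProduct]
    calc ∑ j, dy j * dy j ≤ ∑ _j : Fin sy, (4:ℝ) := by
          refine Finset.sum_le_sum fun j _ => ?_
          have h1 := abs_le.mp (hy j)
          have h2 := abs_le.mp (hμY j)
          simp only [hdydef]
          nlinarith
      _ = 4 * (sy:ℝ) := by
          simp [Finset.sum_const, nsmul_eq_mul]
          ring
  have hu : (SA *ᵥ dx) ⬝ᵥ (SA *ᵥ dx) ≤ 4*(sx:ℝ)/δ := by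
    calc (SA *ᵥ dx) ⬝ᵥ (SA *ᵥ dx) ≤ δ⁻¹ * (dx ⬝ᵥ dx) := hSAcontr dx
      _ ≤ δ⁻¹ * (4 * (sx:ℝ)) := mul_le_mul_of_nonneg_left hdxb (inv_nonneg.mpr hδ.le)
      _ = 4*(sx:ℝ)/δ := by rw [div_eq_mul_inv]; ring
  have hv : (SB *ᵥ dy) ⬝ᵥ (SB *ᵥ dy) ≤ 4*(sy:ℝ)/δ := by
    calc (SB *ᵥ dy) ⬝ᵥ (SB *ᵥ dy) ≤ δ⁻¹ * (dy ⬝ᵥ dy) := hSBcontr dy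
      _ ≤ δ⁻¹ * (4 * (sy:ℝ)) := mul_le_mul_of_nonneg_left hdyb (inv_nonneg.mpr hδ.le)
      _ = 4*(sy:ℝ)/δ := by rw [div_eq_mul_inv]; ring
  have hM1 : (covX P)⁻¹ * C * (covY P)⁻¹ * Cᵀ * (covX P)⁻¹ = SA * (Λ * Λᵀ) * SA := by
    rw [hAinv, hBinv, hΛt, hΛdef]
    simp only [Matrix.mul_assoc]
  have hM2 : (covY P)⁻¹ * Cᵀ * (covX P)⁻¹ * C * (covY P)⁻¹ = SB * (Λᵀ * Λ) * SB := by
    rw [hAinv, hBinv, hΛt, hΛdef]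
    simp only [Matrix.mul_assoc]
  have hM3 : (covY P)⁻¹ * Cᵀ * (covX P)⁻¹ = SB * Λᵀ * SA := by
    rw [hAinv, hBinv, hΛt]
    simp only [Matrix.mul_assoc]
  rw [hM1, hM2, hM3, quad_conj SA hSAsym (Λ * Λᵀ) SA dx dx,
    quad_conj SB hSBsym (Λᵀ * Λ) SB dy dy, quad_conj SB hSBsym Λᵀ SA dy dx]
  set u := SA *ᵥ dx with hudef
  set v := SB *ᵥ dy with hvdef
  set F := frobNorm Λ with hFdef
  have hFpos : 0 < F := Real.sqrt_pos.mpr (frobSq_pos hΛne)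
  have hFle : F ≤ Real.sqrt (((sx:ℝ)/δ) * (16*(sx:ℝ)*(sy:ℝ)) * ((sy:ℝ)/δ)) :=
    Real.sqrt_le_sqrt hΛfrob
  have hff : frobNorm (Λ * Λᵀ) ≤ F^2 := by
    have h1 := frobSq_mul_le Λ Λᵀ
    rw [frobSq_transpose] at h1
    have h2 := Real.sqrt_le_sqrt h1
    rw [Real.sqrt_mul_self (frobSq_nonneg Λ)] at h2
    calc frobNorm (Λ * Λᵀ) ≤ frobSq Λ := h2
      _ = F^2 := (Real.sq_sqrt (frobSq_nonneg Λ)).symm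
  have hff' : frobNorm (Λᵀ * Λ) ≤ F^2 := by
    have h1 := frobSq_mul_le Λᵀ Λ
    rw [frobSq_transpose] at h1
    have h2 := Real.sqrt_le_sqrt h1
    rw [Real.sqrt_mul_self (frobSq_nonneg Λ)] at h2
    calc frobNorm (Λᵀ * Λ) ≤ frobSq Λ := h2
      _ = F^2 := (Real.sq_sqrt (frobSq_nonneg Λ)).symm
  have hb1 : |u ⬝ᵥ (Λ * Λᵀ) *ᵥ u| ≤ (4*(sx:ℝ)/δ) * F^2 := by
    calc |u ⬝ᵥ (Λ * Λᵀ) *ᵥ u|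
        ≤ Real.sqrt (u ⬝ᵥ u) * Real.sqrt (u ⬝ᵥ u) * frobNorm (Λ * Λᵀ) :=
          abs_dot_mulVec_le u (Λ * Λᵀ) u
      _ = (u ⬝ᵥ u) * frobNorm (Λ * Λᵀ) := by
          rw [Real.mul_self_sqrt (dot_self_nonneg u)]
      _ ≤ (4*(sx:ℝ)/δ) * F^2 :=
          mul_le_mul hu hff (frobNorm_nonneg _) (div_nonneg (by positivity) hδ.le)
  have hb2 : |v ⬝ᵥ (Λᵀ * Λ) *ᵥ v| ≤ (4*(sy:ℝ)/δ) * F^2 := by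
    calc |v ⬝ᵥ (Λᵀ * Λ) *ᵥ v|
        ≤ Real.sqrt (v ⬝ᵥ v) * Real.sqrt (v ⬝ᵥ v) * frobNorm (Λᵀ * Λ) :=
          abs_dot_mulVec_le v (Λᵀ * Λ) v
      _ = (v ⬝ᵥ v) * frobNorm (Λᵀ * Λ) := by
          rw [Real.mul_self_sqrt (dot_self_nonneg v)]
      _ ≤ (4*(sy:ℝ)/δ) * F^2 :=
          mul_le_mul hv hff' (frobNorm_nonneg _) (div_nonneg (by positivity) hδ.le)
  have hb3 : |v ⬝ᵥ Λᵀ *ᵥ u| ≤ Real.sqrt (4*(sy:ℝ)/δ) * Real.sqrt (4*(sx:ℝ)/δ) * F := by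
    have s1 : Real.sqrt (u ⬝ᵥ u) ≤ Real.sqrt (4*(sx:ℝ)/δ) := Real.sqrt_le_sqrt hu
    have s2 : Real.sqrt (v ⬝ᵥ v) ≤ Real.sqrt (4*(sy:ℝ)/δ) := Real.sqrt_le_sqrt hv
    calc |v ⬝ᵥ Λᵀ *ᵥ u|
        ≤ Real.sqrt (v ⬝ᵥ v) * Real.sqrt (u ⬝ᵥ u) * frobNorm Λᵀ :=
          abs_dot_mulVec_le v Λᵀ u
      _ = Real.sqrt (v ⬝ᵥ v) * Real.sqrt (u ⬝ᵥ u) * F := by rw [frobNorm_transpose]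
      _ ≤ Real.sqrt (4*(sy:ℝ)/δ) * Real.sqrt (4*(sx:ℝ)/δ) * F := by
          refine mul_le_mul (mul_le_mul s2 s1 (Real.sqrt_nonneg _) (Real.sqrt_nonneg _))
            le_rfl hFpos.le (mul_nonneg (Real.sqrt_nonneg _) (Real.sqrt_nonneg _))
  have habs : ∀ a b c : ℝ, |-a - b + 2*c| ≤ |a| + |b| + 2*|c| := by
    intro a b c
    have h1 := abs_add_le (-a - b) (2*c)
    have h2 : |-a - b| ≤ |a| + |b| := by
      have h3 := abs_add_le (-a) (-b)
      simp only [abs_neg] at h3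
      calc |-a - b| = |-a + -b| := by ring_nf
        _ ≤ |a| + |b| := by simpa using h3
    have h4 : |2*c| = 2*|c| := by rw [abs_mul]; norm_num
    linarith
  have hnum : |-(u ⬝ᵥ (Λ * Λᵀ) *ᵥ u) - v ⬝ᵥ (Λᵀ * Λ) *ᵥ v + 2*(v ⬝ᵥ Λᵀ *ᵥ u)|
      ≤ (4*(sx:ℝ)/δ) * F^2 + (4*(sy:ℝ)/δ) * F^2
        + 2*(Real.sqrt (4*(sy:ℝ)/δ) * Real.sqrt (4*(sx:ℝ)/δ) * F) := by
    have h := habs (u ⬝ᵥ (Λ * Λᵀ) *ᵥ u) (v ⬝ᵥ (Λᵀ * Λ) *ᵥ v) (v ⬝ᵥ Λᵀ *ᵥ u)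
    linarith [hb1, hb2, hb3]
  have h2F : (0:ℝ) < 2*F := by linarith
  have hF0 : F ≠ 0 := ne_of_gt hFpos
  calc |(2*F)⁻¹ * (-(u ⬝ᵥ (Λ * Λᵀ) *ᵥ u) - v ⬝ᵥ (Λᵀ * Λ) *ᵥ v + 2*(v ⬝ᵥ Λᵀ *ᵥ u))|
      = (2*F)⁻¹ * |-(u ⬝ᵥ (Λ * Λᵀ) *ᵥ u) - v ⬝ᵥ (Λᵀ * Λ) *ᵥ v + 2*(v ⬝ᵥ Λᵀ *ᵥ u)| := by
        rw [abs_mul, abs_of_pos (inv_pos.mpr h2F)]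
    _ ≤ (2*F)⁻¹ * ((4*(sx:ℝ)/δ) * F^2 + (4*(sy:ℝ)/δ) * F^2
          + 2*(Real.sqrt (4*(sy:ℝ)/δ) * Real.sqrt (4*(sx:ℝ)/δ) * F)) :=
        mul_le_mul_of_nonneg_left hnum (inv_nonneg.mpr h2F.le)
    _ = (4*(sx:ℝ)/δ + 4*(sy:ℝ)/δ) * F / 2
          + Real.sqrt (4*(sy:ℝ)/δ) * Real.sqrt (4*(sx:ℝ)/δ) := by
        field_simp
    _ ≤ (4*(sx:ℝ)/δ + 4*(sy:ℝ)/δ) *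
          Real.sqrt (((sx:ℝ)/δ) * (16*(sx:ℝ)*(sy:ℝ)) * ((sy:ℝ)/δ)) / 2
          + Real.sqrt (4*(sy:ℝ)/δ) * Real.sqrt (4*(sx:ℝ)/δ) := by
        have hc : (0:ℝ) ≤ 4*(sx:ℝ)/δ + 4*(sy:ℝ)/δ := by
          have := div_nonneg (by positivity : (0:ℝ) ≤ 4*(sx:ℝ)) hδ.le
          have := div_nonneg (by positivity : (0:ℝ) ≤ 4*(sy:ℝ)) hδ.le
          linarith
        have hm := mul_le_mul_of_nonneg_left hFle hc
        linarith
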